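/- Let α > 0, β ≠ 0, δ > 0. Let A = JĤ where Ĥ is the 4×4 symmetric matrix with rows (β² + δ, −β, 0, 0), (−β, 1, 0, 0), (0, 0, 1/(αβ²), 0), (0, 0, 0, 1) and J is the standard symplectic matrix. Then A (as a complex matrix) has exactly four distinct eigenvalues, all purely imaginary: iω₁, −iω₁, iω₂, −iω₂ with ω₁ > ω₂ > 0. -/

import Mathlib

open Polynomial

private lemma eval_charpoly4 (M : Matrix (Fin 4) (Fin 4) ℂ) (μ : ℂ) :
    M.charpoly.eval μ = (μ • (1 : Matrix (Fin 4) (Fin 4) ℂ) - M).det := by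
  have : M.charpoly.eval μ = (evalRingHom μ) M.charmatrix.det := rfl
  rw [this, RingHom.map_det]
  congr 1
  ext i j
  simp [Matrix.charmatrix_apply, Matrix.one_apply, Matrix.diagonal_apply]
  split <;> simp

private lemma det_quartic (c b d μ : ℂ) :
    (μ • (1 : Matrix (Fin 4) (Fin 4) ℂ) -
      !![0, 0, c, 0;
         0, 0, 0, 1;
         -(b ^ 2 + d), b, 0, 0;
         b, -1, 0, 0]).det
    = μ ^ 4 + (1 + c * b ^ 2 + c * d) * μ ^ 2 + c * d := by
  have h : (μ • (1 : Matrix (Fin 4) (Fin 4) ℂ) -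
      !![0, 0, c, 0;
         0, 0, 0, 1;
         -(b ^ 2 + d), b, 0, 0;
         b, -1, 0, 0]) =
      !![μ, 0, -c, 0;
         0, μ, 0, -1;
         b ^ 2 + d, -b, μ, 0;
         -b, 1, 0, μ] := by
    ext i j
    fin_cases i <;> fin_cases j <;>
      simp [Matrix.one_apply, Matrix.vecHead, Matrix.vecTail]
  rw [h]
  simp [Matrix.det_succ_row_zero, Fin.sum_univ_succ, Fin.succAbove,
    Matrix.vecHead, Matrix.vecTail]
  ring

private lemma map_JH (α β δ : ℝ) :
    ((!![0, 0, 1, 0;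
         0, 0, 0, 1;
         -1, 0, 0, 0;
         0, -1, 0, 0] : Matrix (Fin 4) (Fin 4) ℝ) *
     !![β ^ 2 + δ, -β, 0, 0;
        -β, 1, 0, 0;
        0, 0, 1 / (α * β ^ 2), 0;
        0, 0, 0, 1]).map Complex.ofReal =
      !![0, 0, ((1 / (α * β ^ 2) : ℝ) : ℂ), 0;
         0, 0, 0, 1;
         -((β:ℂ) ^ 2 + (δ:ℂ)), (β:ℂ), 0, 0;
         (β:ℂ), -1, 0, 0] := by
  ext i j
  fin_cases i <;> fin_cases j <;>
    simp [Matrix.mul_apply, Fin.sum_univ_succ, Matrix.vecHead, Matrix.vecTail]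

set_option maxHeartbeats 1000000 in
/-- For `δ > 0` the linearization matrix `A = JĤ`, viewed as a complex matrix,
has exactly four distinct eigenvalues, all purely imaginary: `±iω₁, ±iω₂` with `ω₁ > ω₂ > 0`. -/
theorem four_distinct_imaginary_eigenvalues (α β δ : ℝ) (hα : 0 < α) (hβ : β ≠ 0)
    (hδ : 0 < δ)
    (Hhat J : Matrix (Fin 4) (Fin 4) ℝ)
    (hHhat : Hhat = !![β ^ 2 + δ, -β, 0, 0;
                       -β, 1, 0, 0;
                       0, 0, 1 / (α * β ^ 2), 0;
                       0, 0, 0, 1])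
    (hJ : J = !![0, 0, 1, 0;
                 0, 0, 0, 1;
                 -1, 0, 0, 0;
                 0, -1, 0, 0]) :
    ∃ ω₁ ω₂ : ℝ, ω₂ < ω₁ ∧ 0 < ω₂ ∧
      ∀ μ : ℂ, ((J * Hhat).map Complex.ofReal).charpoly.IsRoot μ ↔
        μ = (ω₁ : ℂ) * Complex.I ∨ μ = -((ω₁ : ℂ) * Complex.I) ∨
        μ = (ω₂ : ℂ) * Complex.I ∨ μ = -((ω₂ : ℂ) * Complex.I) := by
  have hβ2 : (0:ℝ) < β ^ 2 := by positivity
  obtain ⟨q, hqdef⟩ : ∃ q : ℝ, q = δ / (α * β ^ 2) := ⟨_, rfl⟩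
  obtain ⟨p, hpdef⟩ : ∃ p : ℝ, p = 1 + 1 / α + q := ⟨_, rfl⟩
  have hq : 0 < q := by rw [hqdef]; positivity
  have hs : 0 < 1 / α := by positivity
  have hp : 0 < p := by rw [hpdef]; linarith
  have hD : 0 < p ^ 2 - 4 * q := by
    have h1 : 0 < 2 * (1/α) * (1 + q) := by positivity
    nlinarith [sq_nonneg (1 - q), sq_nonneg (1/α)]
  obtain ⟨sD, hsDdef⟩ : ∃ s : ℝ, s = Real.sqrt (p ^ 2 - 4 * q) := ⟨_, rfl⟩
  have hsDsq : sD ^ 2 = p ^ 2 - 4 * q := by rw [hsDdef]; exact Real.sq_sqrt hD.le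
  have hsDpos : 0 < sD := by rw [hsDdef]; exact Real.sqrt_pos.mpr hD
  have hsDlt : sD < p := by nlinarith
  obtain ⟨ω₁, hω₁def⟩ : ∃ w : ℝ, w = Real.sqrt ((p + sD) / 2) := ⟨_, rfl⟩
  obtain ⟨ω₂, hω₂def⟩ : ∃ w : ℝ, w = Real.sqrt ((p - sD) / 2) := ⟨_, rfl⟩
  have hω₁sq : ω₁ ^ 2 = (p + sD) / 2 := by
    rw [hω₁def]; exact Real.sq_sqrt (by linarith)
  have hω₂sq : ω₂ ^ 2 = (p - sD) / 2 := by
    rw [hω₂def]; exact Real.sq_sqrt (by linarith)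
  have hω₂pos : 0 < ω₂ := by rw [hω₂def]; exact Real.sqrt_pos.mpr (by linarith)
  have hlt : ω₂ < ω₁ := by
    rw [hω₁def, hω₂def]
    exact Real.sqrt_lt_sqrt (by linarith) (by linarith)
  refine ⟨ω₁, ω₂, hlt, hω₂pos, ?_⟩
  have hsum : ω₁ ^ 2 + ω₂ ^ 2 = p := by rw [hω₁sq, hω₂sq]; ring
  have hprod : ω₁ ^ 2 * ω₂ ^ 2 = q := by
    rw [hω₁sq, hω₂sq]; nlinarith
  intro μ
  have heval : ((J * Hhat).map Complex.ofReal).charpoly.eval μ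
      = μ ^ 4 + ((p:ℝ) : ℂ) * μ ^ 2 + ((q:ℝ) : ℂ) := by
    rw [hHhat, hJ, eval_charpoly4, map_JH, det_quartic]
    have h1 : (1 : ℂ) + ((1 / (α * β ^ 2) : ℝ) : ℂ) * (β:ℂ) ^ 2
        + ((1 / (α * β ^ 2) : ℝ) : ℂ) * (δ:ℂ) = ((p:ℝ) : ℂ) := by
      rw [hpdef, hqdef]
      push_cast
      have hβc : (β:ℂ) ≠ 0 := Complex.ofReal_ne_zero.mpr hβ
      have hαc : (α:ℂ) ≠ 0 := Complex.ofReal_ne_zero.mpr hα.ne'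
      field_simp
    have h2 : ((1 / (α * β ^ 2) : ℝ) : ℂ) * (δ:ℂ) = ((q:ℝ) : ℂ) := by
      rw [hqdef]; push_cast; ring
    rw [h1, h2]
  have hfact : μ ^ 4 + ((p:ℝ) : ℂ) * μ ^ 2 + ((q:ℝ) : ℂ)
      = (μ - (ω₁:ℂ) * Complex.I) * (μ + (ω₁:ℂ) * Complex.I)
        * ((μ - (ω₂:ℂ) * Complex.I) * (μ + (ω₂:ℂ) * Complex.I)) := by
    have hpc : ((p:ℝ) : ℂ) = ((ω₁:ℂ))^2 + ((ω₂:ℂ))^2 := by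
      rw [← hsum]; push_cast; ring
    have hqc : ((q:ℝ) : ℂ) = ((ω₁:ℂ))^2 * ((ω₂:ℂ))^2 := by
      rw [← hprod]; push_cast; ring
    rw [hpc, hqc]
    have hI : Complex.I ^ 2 = -1 := Complex.I_sq
    linear_combination (μ^2*((ω₁:ℂ)^2+(ω₂:ℂ)^2) + (ω₁:ℂ)^2*(ω₂:ℂ)^2*(1 - Complex.I^2)) * hI
  constructor
  · intro h
    have h0 : μ ^ 4 + ((p:ℝ) : ℂ) * μ ^ 2 + ((q:ℝ) : ℂ) = 0 := by
      rw [← heval]; exact h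
    rw [hfact] at h0
    rcases mul_eq_zero.mp h0 with h' | h'
    · rcases mul_eq_zero.mp h' with h'' | h''
      · exact Or.inl (by linear_combination h'')
      · exact Or.inr (Or.inl (by linear_combination h''))
    · rcases mul_eq_zero.mp h' with h'' | h''
      · exact Or.inr (Or.inr (Or.inl (by linear_combination h'')))
      · exact Or.inr (Or.inr (Or.inr (by linear_combination h'')))
  · intro h
    have h0 : μ ^ 4 + ((p:ℝ) : ℂ) * μ ^ 2 + ((q:ℝ) : ℂ) = 0 := by
      rw [hfact]
      rcases h with h | h | h | h <;> rw [h] <;> ring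
    show ((J * Hhat).map Complex.ofReal).charpoly.eval μ = 0
    rw [heval]; exact h0
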